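/- Pigeonhole step for the full-set extraction: let t be a fixed injective n-tuple over an infinite type D, and let S be a finite set of n-tuples each of whose range intersects ds(t). If |S| > (2^n)^2 · n! · M, then there exist a nonempty set V ⊆ ds(t), a set of positions J ⊆ Fin n, a bijection assignment, and a subset S' ⊆ S with |S'| > M such that all tuples in S' agree on the positions in J, where they carry exactly the values of V in the same fixed order, and the values of V occur in tuples of S' only at positions in J. -/

import Mathlib

lemma aux4pow (n : ℕ) : (n+1)^n ≤ 4^n * n.factorial := by
  induction n with
  | zero => simp
  | succ n ih =>
    have crux : (n+2)^(n+1) ≤ 4*(n+1)^(n+1) := by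
      have hm : (0:ℝ) < (n:ℝ)+1 := by positivity
      have h1 : (1 + 1/((n:ℝ)+1)) ≤ Real.exp (1/((n:ℝ)+1)) := by
        have := Real.add_one_le_exp (1/((n:ℝ)+1)); linarith
      have h2 : (1 + 1/((n:ℝ)+1))^(n+1) ≤ (Real.exp (1/((n:ℝ)+1)))^(n+1) :=
        pow_le_pow_left₀ (by positivity) h1 _
      have h3 : (Real.exp (1/((n:ℝ)+1)))^(n+1) = Real.exp 1 := by
        rw [← Real.exp_nat_mul]
        congr 1
        field_simp
        norm_num
      have h4 : Real.exp 1 < 4 := by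
        have := Real.exp_one_lt_d9; linarith
      have h5 : ((n:ℝ)+2)^(n+1) ≤ 4 * ((n:ℝ)+1)^(n+1) := by
        have e : ((n:ℝ)+2) = (1 + 1/((n:ℝ)+1)) * ((n:ℝ)+1) := by field_simp; ring
        rw [e, mul_pow]
        calc (1+1/((n:ℝ)+1))^(n+1) * ((n:ℝ)+1)^(n+1)
            ≤ Real.exp 1 * ((n:ℝ)+1)^(n+1) := by
              rw [← h3]; exact mul_le_mul_of_nonneg_right h2 (by positivity)
          _ ≤ 4 * ((n:ℝ)+1)^(n+1) := mul_le_mul_of_nonneg_right h4.le (by positivity)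
      exact_mod_cast h5
    calc (n+1+1)^(n+1) = (n+2)^(n+1) := by norm_num
      _ ≤ 4*(n+1)^(n+1) := crux
      _ = 4*(n+1)*(n+1)^n := by ring
      _ ≤ 4*(n+1)*(4^n * n.factorial) := Nat.mul_le_mul_left _ ih
      _ = 4^(n+1) * (n+1).factorial := by
          rw [Nat.factorial_succ]; ring

theorem pigeonhole_full_extraction {D : Type*} [Infinite D] {n M : ℕ} (hn : 1 ≤ n)
    (t : Fin n → D) (htinj : Function.Injective t)
    (S : Finset (Fin n → D))
    (hmeet : ∀ s ∈ S, (Set.range s ∩ Set.range t).Nonempty)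
    (hcard : (2 ^ n) ^ 2 * Nat.factorial n * M < S.card) :
    ∃ (J : Finset (Fin n)), J.Nonempty ∧
      ∃ g : Fin n → D, (∀ j ∈ J, g j ∈ Set.range t) ∧
        ∃ S' ⊆ S, M < S'.card ∧
          ∀ s ∈ S', (∀ j ∈ J, s j = g j) ∧
            (∀ i ∉ J, s i ∉ Set.range t) ∧
            Set.range s ∩ Set.range t = g '' (J : Set (Fin n)) := by
  classical
  set τ : D → Option (Fin n) := fun d => if h : ∃ k, t k = d then some h.choose else none
    with hτdef
  have hsome : ∀ d k, τ d = some k → t k = d := by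
    intro d k h
    by_cases hd : ∃ k', t k' = d
    · rw [hτdef] at h
      simp only [dif_pos hd] at h
      injection h with h'
      rw [← h']
      exact hd.choose_spec
    · rw [hτdef] at h
      simp only [dif_neg hd] at h
      exact absurd h (by simp)
  have hnone : ∀ d, τ d = none → ¬∃ k, t k = d := by
    intro d h hd
    rw [hτdef] at h
    simp only [dif_pos hd] at h
    exact absurd h (by simp)
  have hyes : ∀ d, (∃ k, t k = d) → τ d ≠ none := by
    intro d hd h
    exact hnone d h hd
  -- pigeonhole over signatures
  have hmaps : ∀ s ∈ S, (fun i => τ (s i)) ∈ (Finset.univ : Finset (Fin n → Option (Fin n))) :=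
    fun _ _ => Finset.mem_univ _
  have hcount : (Finset.univ : Finset (Fin n → Option (Fin n))).card * M < S.card := by
    have h1 : (Finset.univ : Finset (Fin n → Option (Fin n))).card = (n+1)^n := by
      simp [Finset.card_univ, Fintype.card_fun]
    have h2 : (4:ℕ)^n = (2^n)^2 := by
      rw [← pow_mul, mul_comm n 2, pow_mul]
      norm_num
    rw [h1]
    calc (n+1)^n * M ≤ (4^n * n.factorial) * M :=
          Nat.mul_le_mul_right _ (aux4pow n)
      _ = (2^n)^2 * n.factorial * M := by rw [h2]
      _ < S.card := hcard
  obtain ⟨φ, -, hφ⟩ := Finset.exists_lt_card_fiber_of_mul_lt_card_of_maps_to hmaps hcount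
  set S' : Finset (Fin n → D) := S.filter (fun s => (fun i => τ (s i)) = φ) with hS'def
  have hmem : ∀ s ∈ S', s ∈ S ∧ ∀ i, τ (s i) = φ i := by
    intro s hs
    rw [hS'def, Finset.mem_filter] at hs
    exact ⟨hs.1, fun i => congrFun hs.2 i⟩
  set J : Finset (Fin n) := Finset.univ.filter (fun i => (φ i).isSome) with hJdef
  have hJmem : ∀ i, i ∈ J ↔ (φ i).isSome := by
    intro i; rw [hJdef, Finset.mem_filter]; simp
  set g : Fin n → D := fun i => t ((φ i).getD ⟨0, hn⟩) with hgdef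
  -- the key per-element facts
  have keyJ : ∀ s ∈ S', ∀ j ∈ J, s j = g j := by
    intro s hs j hj
    obtain ⟨k, hk⟩ := Option.isSome_iff_exists.mp ((hJmem j).mp hj)
    have hτ : τ (s j) = some k := by rw [(hmem s hs).2 j, hk]
    have := hsome _ _ hτ
    rw [hgdef]; simp only [hk, Option.getD_some]
    exact this.symm
  have keyNJ : ∀ s ∈ S', ∀ i ∉ J, s i ∉ Set.range t := by
    intro s hs i hi hr
    have hne : φ i = none := Option.not_isSome_iff_eq_none.mp (fun h => hi ((hJmem i).mpr h))
    have hτ : τ (s i) = none := by rw [(hmem s hs).2 i, hne]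
    exact hnone _ hτ hr
  refine ⟨J, ?_, g, ?_, S', Finset.filter_subset _ _, hφ, ?_⟩
  · -- J nonempty
    have hpos : 0 < S'.card := lt_of_le_of_lt (Nat.zero_le M) hφ
    obtain ⟨s₀, hs₀⟩ := Finset.card_pos.mp hpos
    obtain ⟨d, ⟨i, hdi⟩, hdt⟩ := hmeet s₀ (hmem s₀ hs₀).1
    refine ⟨i, (hJmem i).mpr ?_⟩
    have hex : ∃ k, t k = s₀ i := by
      obtain ⟨k, hk⟩ := hdt
      exact ⟨k, by rw [hk, hdi]⟩
    have : τ (s₀ i) ≠ none := hyes _ hex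
    rw [(hmem s₀ hs₀).2 i] at this
    exact Option.ne_none_iff_isSome.mp this
  · intro j _
    exact ⟨_, rfl⟩
  · intro s hs
    refine ⟨keyJ s hs, keyNJ s hs, ?_⟩
    ext d
    constructor
    · rintro ⟨⟨i, hdi⟩, hdt⟩
      have hiJ : i ∈ J := by
        refine (hJmem i).mpr ?_
        have hex : ∃ k, t k = s i := by
          obtain ⟨k, hk⟩ := hdt
          exact ⟨k, by rw [hk, hdi]⟩
        have : τ (s i) ≠ none := hyes _ hex
        rw [(hmem s hs).2 i] at this
        exact Option.ne_none_iff_isSome.mp this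
      exact ⟨i, hiJ, by rw [← keyJ s hs i hiJ, hdi]⟩
    · rintro ⟨j, hjJ, rfl⟩
      have hjJ' : j ∈ J := hjJ
      constructor
      · exact ⟨j, keyJ s hs j hjJ'⟩
      · exact ⟨_, rfl⟩
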